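/- Let S ⊆ V be a convex set in a real vector space, let f : V → ℝ be a function with f ≤ L on S such that f((1-t)•ρ + t•σ) = (1-t)f(ρ) + t f(σ) fails only by being ≤ (i.e., f is convex on S). Suppose ρ, σ ∈ S with f(ρ) = f(σ) = L, and suppose t ∉ [0,1] is such that τ := (1-t)•ρ + t•σ ∈ S. Then f(τ) = L. -/

import Mathlib

theorem stmt_6 {V : Type*} [AddCommGroup V] [Module ℝ V]
    (S : Set V) (f : V → ℝ) (L : ℝ)
    (hconv : ConvexOn ℝ S f)
    (hL : ∀ x ∈ S, f x ≤ L)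
    (ρ σ : V) (hρ : ρ ∈ S) (hσ : σ ∈ S)
    (hfρ : f ρ = L) (hfσ : f σ = L)
    (t : ℝ) (ht : t ∉ Set.Icc (0 : ℝ) 1)
    (τ : V) (hτdef : τ = (1 - t) • ρ + t • σ) (hτ : τ ∈ S) :
    f τ = L := by
  have hle := hL τ hτ
  simp only [Set.mem_Icc, not_and_or, not_le] at ht
  refine le_antisymm hle ?_
  rcases ht with h0 | h1
  · have h1t : (0:ℝ) < 1 - t := by linarith
    have key := hconv.2 hσ hτ (show (0:ℝ) ≤ -t/(1-t) from div_nonneg (by linarith) h1t.le)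
      (show (0:ℝ) ≤ 1/(1-t) from by positivity)
      (show -t/(1-t) + 1/(1-t) = 1 by field_simp; ring)
    have hcomb : (-t/(1-t)) • σ + (1/(1-t)) • τ = ρ := by
      rw [hτdef]; match_scalars <;> (field_simp; try ring)
    rw [hcomb, hfρ, hfσ, smul_eq_mul, smul_eq_mul,
      div_mul_eq_mul_div, div_mul_eq_mul_div, ← add_div, le_div_iff₀ h1t] at key
    ring_nf at key
    linarith
  · have h0t : (0:ℝ) < t := by linarith
    have key := hconv.2 hρ hτ (show (0:ℝ) ≤ 1 - 1/t by rw [sub_nonneg, div_le_one h0t]; linarith)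
      (show (0:ℝ) ≤ 1/t from by positivity) (show 1 - 1/t + 1/t = 1 by ring)
    have hcomb : (1 - 1/t) • ρ + (1/t) • τ = σ := by
      rw [hτdef]; match_scalars <;> (field_simp; try ring)
    have e : 1 - 1/t = (t-1)/t := by field_simp
    rw [hcomb, hfρ, hfσ, smul_eq_mul, smul_eq_mul, e,
      div_mul_eq_mul_div, div_mul_eq_mul_div, ← add_div, le_div_iff₀ h0t] at key
    ring_nf at key
    linarith
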